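/- Let G=(V,E) be a finite directed graph and let u1, u2, v1, v2 be four distinct vertices of G. Let G'=(V∪{w}, E∪{(u2,w),(w,v1)}) be the directed graph obtained from G by adding a new vertex w not in V together with the two directed edges (u2,w) and (w,v1). Then there exist a simple path from u1 to u2 in G and a simple path from v1 to v2 in G whose vertex sets are disjoint, if and only if there exists a simple path from u1 to v2 in G' that visits w. -/

import Mathlib

/-- The list of directed edges traversed by a walk given as its list of vertices. -/
def walkEdges {V : Type} (l : List V) : List (V × V) := l.zip l.tail

/-- `l` is (the vertex list of) a walk from `a` to `b` in the directed graph with edge set `E`. -/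
def IsWalk {V : Type} (E : Set (V × V)) (a b : V) (l : List V) : Prop :=
  l ≠ [] ∧ l.head? = some a ∧ l.getLast? = some b ∧ ∀ p ∈ walkEdges l, p ∈ E

/-- A simple path: a walk all of whose vertices are distinct. -/
def IsSimplePath {V : Type} (E : Set (V × V)) (a b : V) (l : List V) : Prop :=
  IsWalk E a b l ∧ l.Nodup

/-- The graph `G'` obtained from `G = (V, E)` by adding a new vertex `w` (modelled as
`none : Option V`) together with the edges `(u₂, w)` and `(w, v₁)`. -/
def extGraph {V : Type} (E : Set (V × V)) (u₂ v₁ : V) : Set (Option V × Option V) :=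
  {p | ∃ a b, (a, b) ∈ E ∧ p = (some a, some b)} ∪ {(some u₂, none), (none, some v₁)}

lemma walk_iff_chain {V : Type} (E : Set (V × V)) (l : List V) :
    (∀ p ∈ walkEdges l, p ∈ E) ↔ l.IsChain (fun x y => (x, y) ∈ E) := by
  induction l with
  | nil => simp [walkEdges, List.isChain_nil]
  | cons a t ih =>
    cases t with
    | nil => simp [walkEdges, List.isChain_singleton]
    | cons b t' =>
      simp only [walkEdges, List.tail_cons, List.zip_cons_cons, List.mem_cons,
        List.isChain_cons_cons] at *
      constructor
      · intro h
        exact ⟨h _ (Or.inl rfl), ih.mp fun p hp => h p (Or.inr hp)⟩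
      · rintro ⟨h1, h2⟩ p (rfl | hp)
        · exact h1
        · exact (ih.mpr h2) p hp

lemma allSome {V : Type} {A : List (Option V)} (h : none ∉ A) :
    (A.filterMap id).map some = A := by
  induction A with
  | nil => rfl
  | cons a t ih =>
    cases a with
    | none => simp at h
    | some x =>
      simp only [List.mem_cons] at h
      push_neg at h
      simp [ih h.2]; exact ih h.2


lemma head?_app {α : Type*} {A : List α} (B : List α) (h : A ≠ []) :
    (A ++ B).head? = A.head? := by
  obtain ⟨x, hx⟩ := Option.isSome_iff_exists.mp (List.isSome_head?.mpr h)
  rw [List.head?_append, hx]; rfl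

lemma getLast?_app {α : Type*} (A : List α) {B : List α} (h : B ≠ []) :
    (A ++ B).getLast? = B.getLast? := by
  obtain ⟨x, hx⟩ := Option.isSome_iff_exists.mp (List.getLast?_isSome.mpr h)
  rw [List.getLast?_append, hx]; rfl

lemma mem_ext_some {V : Type} {E : Set (V × V)} {u₂ v₁ a b : V} :
    (some a, some b) ∈ extGraph E u₂ v₁ ↔ (a, b) ∈ E := by
  simp only [extGraph, Set.mem_union, Set.mem_setOf_eq, Set.mem_insert_iff,
    Set.mem_singleton_iff, Prod.mk.injEq]
  constructor
  · rintro (⟨x, y, hxy, h1, h2⟩ | ⟨_, h⟩ | ⟨h, _⟩)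
    · simp only [Option.some.injEq] at h1 h2; subst h1; subst h2; exact hxy
    · exact absurd h (by simp)
    · exact absurd h (by simp)
  · intro h; exact Or.inl ⟨a, b, h, rfl, rfl⟩

lemma mem_ext_to_none {V : Type} {E : Set (V × V)} {u₂ v₁ : V} {x : Option V}
    (h : (x, none) ∈ extGraph E u₂ v₁) : x = some u₂ := by
  simp only [extGraph, Set.mem_union, Set.mem_setOf_eq, Set.mem_insert_iff,
    Set.mem_singleton_iff, Prod.mk.injEq] at h
  rcases h with ⟨a, b, _, _, h2⟩ | ⟨h, _⟩ | ⟨_, h⟩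
  · exact absurd h2 (by simp)
  · exact h
  · exact absurd h (by simp)

lemma mem_ext_from_none {V : Type} {E : Set (V × V)} {u₂ v₁ : V} {y : Option V}
    (h : (none, y) ∈ extGraph E u₂ v₁) : y = some v₁ := by
  simp only [extGraph, Set.mem_union, Set.mem_setOf_eq, Set.mem_insert_iff,
    Set.mem_singleton_iff, Prod.mk.injEq] at h
  rcases h with ⟨a, b, _, h1, _⟩ | ⟨h, _⟩ | ⟨_, h'⟩
  · exact absurd h1 (by simp)
  · exact absurd h (by simp)
  · exact h'

/-- There exist vertex-disjoint simple paths `u₁ → u₂` and `v₁ → v₂` in `G` iff there is a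
simple path from `u₁` to `v₂` in `G'` visiting the new vertex `w`. -/
theorem stmt1 {V : Type} [Fintype V] (E : Set (V × V)) (u₁ u₂ v₁ v₂ : V)
    (h12 : u₁ ≠ u₂) (h13 : u₁ ≠ v₁) (h14 : u₁ ≠ v₂)
    (h23 : u₂ ≠ v₁) (h24 : u₂ ≠ v₂) (h34 : v₁ ≠ v₂) :
    (∃ l₁ l₂ : List V, IsSimplePath E u₁ u₂ l₁ ∧ IsSimplePath E v₁ v₂ l₂ ∧
        ∀ x ∈ l₁, x ∉ l₂) ↔
      (∃ l : List (Option V), IsSimplePath (extGraph E u₂ v₁) (some u₁) (some v₂) l ∧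
        none ∈ l) := by
  constructor
  · rintro ⟨l₁, l₂, ⟨⟨hne₁, hh₁, hl₁, he₁⟩, hnd₁⟩, ⟨⟨hne₂, hh₂, hl₂, he₂⟩, hnd₂⟩, hdisj⟩
    refine ⟨l₁.map some ++ none :: l₂.map some, ⟨⟨by simp [hne₁], ?_, ?_, ?_⟩, ?_⟩, by simp⟩
    · rw [head?_app _ (by simp [hne₁]), List.head?_map, hh₁]; rfl
    · rw [getLast?_app _ (by simp)]
      rw [show (none :: l₂.map some) = [none] ++ l₂.map some from rfl,
        getLast?_app _ (by simp [hne₂]), List.getLast?_map, hl₂]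
      rfl
    · rw [walk_iff_chain, List.isChain_append]
      refine ⟨?_, ?_, ?_⟩
      · rw [List.isChain_map]
        exact ((walk_iff_chain E l₁).mp he₁).imp fun a b h => mem_ext_some.mpr h
      · rw [List.isChain_cons]
        refine ⟨?_, ?_⟩
        · intro y hy
          rw [List.head?_map, hh₂] at hy
          simp only [Option.map_some, Option.mem_def, Option.some.injEq] at hy
          subst hy
          exact Or.inr (Or.inr rfl)
        · rw [List.isChain_map]
          exact ((walk_iff_chain E l₂).mp he₂).imp fun a b h => mem_ext_some.mpr h
      · intro x hx y hy
        rw [List.getLast?_map, hl₁] at hx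
        simp only [Option.map_some, Option.mem_def, Option.some.injEq] at hx
        simp only [List.head?_cons, Option.mem_def, Option.some.injEq] at hy
        subst hx; subst hy
        exact Or.inr (Or.inl rfl)
    · rw [List.nodup_append']
      refine ⟨hnd₁.map (Option.some_injective V), ?_, ?_⟩
      · rw [List.nodup_cons]
        exact ⟨by simp, hnd₂.map (Option.some_injective V)⟩
      · intro x hx hx'
        simp only [List.mem_map] at hx
        obtain ⟨a, ha, rfl⟩ := hx
        simp only [List.mem_cons, List.mem_map] at hx'
        rcases hx' with h | ⟨b, hb, hab⟩
        · exact absurd h (by simp)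
        · obtain rfl := Option.some_injective V hab.symm
          exact hdisj a ha hb
  · rintro ⟨l, ⟨⟨hne, hh, hl, he⟩, hnd⟩, hmem⟩
    obtain ⟨A, B, rfl⟩ := List.append_of_mem hmem
    rw [List.nodup_append'] at hnd
    obtain ⟨hndA, hndB', hdisjAB⟩ := hnd
    rw [List.nodup_cons] at hndB'
    obtain ⟨hnB, hndB⟩ := hndB'
    have hnA : none ∉ A := fun h => hdisjAB h List.mem_cons_self
    have hchain := (walk_iff_chain _ _).mp he
    rw [List.isChain_append] at hchain
    obtain ⟨hcA, hcB', hjoin⟩ := hchain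
    rw [List.isChain_cons] at hcB'
    obtain ⟨hheadB, hcB⟩ := hcB'
    -- A and B are nonempty
    have hAne : A ≠ [] := by
      rintro rfl
      simp only [List.nil_append, List.head?_cons] at hh
      exact absurd hh (by simp)
    have hBne : B ≠ [] := by
      rintro rfl
      rw [getLast?_app _ (by simp)] at hl
      simp only [List.getLast?_singleton, Option.some.injEq] at hl
      exact absurd hl (by simp)
    set A' := A.filterMap id with hA'
    set B' := B.filterMap id with hB'
    have hAeq : A'.map some = A := allSome hnA
    have hBeq : B'.map some = B := allSome hnB
    have hA'ne : A' ≠ [] := by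
      intro h; rw [h] at hAeq; exact hAne hAeq.symm
    have hB'ne : B' ≠ [] := by
      intro h; rw [h] at hBeq; exact hBne hBeq.symm
    -- endpoints
    have hAlast : A.getLast? = some (some u₂) := by
      obtain ⟨x, hx⟩ := Option.isSome_iff_exists.mp (List.getLast?_isSome.mpr hAne)
      have := mem_ext_to_none (hjoin x hx none rfl)
      rw [hx, this]
    have hBhead : B.head? = some (some v₁) := by
      obtain ⟨y, hy⟩ := Option.isSome_iff_exists.mp (List.isSome_head?.mpr hBne)
      have := mem_ext_from_none (hheadB y hy)
      rw [hy, this]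
    have hAhead : A.head? = some (some u₁) := by
      rwa [head?_app _ hAne] at hh
    have hBlast : B.getLast? = some (some v₂) := by
      rw [getLast?_app _ (by simp)] at hl
      rwa [show (none :: B) = [none] ++ B from rfl, getLast?_app _ hBne] at hl
    refine ⟨A', B', ⟨⟨hA'ne, ?_, ?_, ?_⟩, ?_⟩, ⟨⟨hB'ne, ?_, ?_, ?_⟩, ?_⟩, ?_⟩
    · have := congrArg List.head? hAeq
      rw [List.head?_map, hAhead] at this
      cases h : A'.head? with
      | none => rw [h] at this; simp at this
      | some x => rw [h] at this; simp only [Option.map_some, Option.some.injEq] at this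
                  rw [this]
    · have := congrArg List.getLast? hAeq
      rw [List.getLast?_map, hAlast] at this
      cases h : A'.getLast? with
      | none => rw [h] at this; simp at this
      | some x => rw [h] at this; simp only [Option.map_some, Option.some.injEq] at this
                  rw [this]
    · rw [walk_iff_chain]
      rw [← hAeq, List.isChain_map] at hcA
      exact hcA.imp fun a b h => mem_ext_some.mp h
    · rw [← hAeq] at hndA; exact hndA.of_map
    · have := congrArg List.head? hBeq
      rw [List.head?_map, hBhead] at this
      cases h : B'.head? with
      | none => rw [h] at this; simp at this
      | some x => rw [h] at this; simp only [Option.map_some, Option.some.injEq] at this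
                  rw [this]
    · have := congrArg List.getLast? hBeq
      rw [List.getLast?_map, hBlast] at this
      cases h : B'.getLast? with
      | none => rw [h] at this; simp at this
      | some x => rw [h] at this; simp only [Option.map_some, Option.some.injEq] at this
                  rw [this]
    · rw [walk_iff_chain]
      rw [← hBeq, List.isChain_map] at hcB
      exact hcB.imp fun a b h => mem_ext_some.mp h
    · rw [← hBeq] at hndB; exact hndB.of_map
    · intro x hxA hxB
      have h1 : (some x : Option V) ∈ A := by
        rw [← hAeq]; exact List.mem_map_of_mem (f := some) hxA
      have h2 : (some x : Option V) ∈ none :: B := by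
        rw [List.mem_cons, ← hBeq]
        exact Or.inr (List.mem_map_of_mem (f := some) hxB)
      exact hdisjAB h1 h2
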